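/- arXiv:2410.14046 — 2 statements merged into one kernel-verified Lean document; each statement's English description precedes it below -/
import Mathlib

section
/- Let H be a real inner product space, S a set, and φ : S → H a feature map; for ξ ∈ H and t ∈ S write ξ(t) := ⟪ξ, φ t⟫ for the evaluation. Fix n, p, R ∈ ℕ, finite subsets T_i ⊆ S for i ∈ [n] with T = ∪_{i=1}^n T_i, data values X_{ij}(t) ∈ ℝ for i ∈ [n], j ∈ [p], t ∈ T_i, a function f : ℝ × ℝ → ℝ, and λ > 0. Define the objective F on tuples ((a_r, b_r, ξ_r))_{r=1}^R ∈ (ℝⁿ × ℝᵖ × H)^R by F = Σ_{i=1}^n Σ_{j=1}^p Σ_{t∈T_i} f( Σ_{r=1}^R (a_r)_i·(b_r)_j·⟪ξ_r, φ t⟫, X_{ij}(t) ), and let the feasible set be Φ = { ((a_r,b_r,ξ_r))_r : ‖a_r‖·‖b_r‖·‖ξ_r‖ ≤ λ for all r }. If F attains its minimum over Φ at some point ((â_r, b̂_r, ξ̂_r))_r ∈ Φ, then, letting P denote the orthogonal projection of H onto the finite-dimensional subspace V = span{φ t : t ∈ T}, the point ((â_r, b̂_r, P ξ̂_r))_r also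 lies in Φ and also minimizes F over Φ. Consequently the problem admits a minimizer in which each functional factor has the form ξ̂_r = Σ_{t∈T} θ_{r,t}·φ t for real coefficients θ_{r,t}. -/
open scoped RealInnerProductSpace

/-- Representer-theorem content of Proposition 1: if the generalized tensor
decomposition objective attains its minimum over the feasible set Φ, then
replacing each functional factor by its orthogonal projection onto
`V = span {φ t : t ∈ T}` stays feasible and still minimizes, so there is a
minimizer whose functional factors are finite linear combinations of the
feature vectors at the observed time points. -/
theorem stmt_1
    {H : Type*} [NormedAddCommGroup H] [InnerProductSpace ℝ H]
    {S : Type*} [DecidableEq S] (φ : S → H)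
    (n p R : ℕ) (Ti : Fin n → Finset S)
    (X : Fin n → Fin p → S → ℝ) (f : ℝ → ℝ → ℝ) (lam : ℝ) (hlam : 0 < lam)
    (T : Finset S) (hT : T = Finset.univ.biUnion Ti)
    (F : (Fin R → EuclideanSpace ℝ (Fin n) × EuclideanSpace ℝ (Fin p) × H) → ℝ)
    (hF : ∀ v, F v = ∑ i : Fin n, ∑ j : Fin p, ∑ t ∈ Ti i,
        f (∑ r : Fin R, (v r).1 i * (v r).2.1 j * ⟪(v r).2.2, φ t⟫) (X i j t))
    (Φ : Set (Fin R → EuclideanSpace ℝ (Fin n) × EuclideanSpace ℝ (Fin p) × H))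
    (hΦ : Φ = {v | ∀ r, ‖(v r).1‖ * ‖(v r).2.1‖ * ‖(v r).2.2‖ ≤ lam})
    (V : Submodule ℝ H) (hV : V = Submodule.span ℝ (φ '' (T : Set S)))
    -- P is the orthogonal projection of H onto V
    (P : H → H) (hP : ∀ w : H, P w ∈ V ∧ w - P w ∈ Vᗮ)
    (vhat : Fin R → EuclideanSpace ℝ (Fin n) × EuclideanSpace ℝ (Fin p) × H)
    (hmem : vhat ∈ Φ) (hmin : ∀ v ∈ Φ, F vhat ≤ F v) :
    (fun r => ((vhat r).1, (vhat r).2.1, P (vhat r).2.2)) ∈ Φ ∧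
    (∀ v ∈ Φ, F (fun r => ((vhat r).1, (vhat r).2.1, P (vhat r).2.2)) ≤ F v) ∧
    ∃ θ : Fin R → S → ℝ, ∀ r, P (vhat r).2.2 = ∑ t ∈ T, θ r t • φ t := by
  -- key fact 1: projection doesn't increase norm
  have hnorm : ∀ w : H, ‖P w‖ ≤ ‖w‖ := by
    intro w
    obtain ⟨hmemV, hperp⟩ := hP w
    have horth : ⟪P w, w - P w⟫ = 0 :=
      (Submodule.mem_orthogonal V (w - P w)).mp hperp (P w) hmemV
    have hsq : ‖w‖ ^ 2 = ‖P w‖ ^ 2 + ‖w - P w‖ ^ 2 := by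
      have := norm_add_sq_real (P w) (w - P w)
      simp only [horth, mul_zero, add_zero] at this
      simpa [add_sub_cancel] using this
    nlinarith [norm_nonneg (P w), norm_nonneg w, norm_nonneg (w - P w), sq_nonneg (‖w - P w‖)]
  -- key fact 2: for t ∈ T, inner products agree
  have hinner : ∀ (w : H) (t : S), t ∈ T → ⟪P w, φ t⟫ = ⟪w, φ t⟫ := by
    intro w t ht
    have hφ : φ t ∈ V := by
      rw [hV]
      exact Submodule.subset_span ⟨t, by simpa using ht, rfl⟩
    have horth : ⟪φ t, w - P w⟫ = 0 :=
      (Submodule.mem_orthogonal V (w - P w)).mp (hP w).2 (φ t) hφ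
    have : ⟪w - P w, φ t⟫ = 0 := by
      rw [real_inner_comm]; exact horth
    have := this
    rw [inner_sub_left] at this
    linarith
  -- feasibility
  have hmem' : (fun r => ((vhat r).1, (vhat r).2.1, P (vhat r).2.2)) ∈ Φ := by
    rw [hΦ]
    intro r
    rw [hΦ] at hmem
    have h1 := hmem r
    have h2 : ‖(vhat r).1‖ * ‖(vhat r).2.1‖ * ‖P (vhat r).2.2‖ ≤
        ‖(vhat r).1‖ * ‖(vhat r).2.1‖ * ‖(vhat r).2.2‖ := by
      have := hnorm (vhat r).2.2
      have hnn : 0 ≤ ‖(vhat r).1‖ * ‖(vhat r).2.1‖ :=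
        mul_nonneg (norm_nonneg _) (norm_nonneg _)
      exact mul_le_mul_of_nonneg_left this hnn
    exact h2.trans h1
  -- F value unchanged
  have hFeq : F (fun r => ((vhat r).1, (vhat r).2.1, P (vhat r).2.2)) = F vhat := by
    rw [hF, hF]
    refine Finset.sum_congr rfl fun i _ => Finset.sum_congr rfl fun j _ =>
      Finset.sum_congr rfl fun t ht => ?_
    congr 1
    refine Finset.sum_congr rfl fun r _ => ?_
    have htT : t ∈ T := by
      rw [hT]; exact Finset.mem_biUnion.mpr ⟨i, Finset.mem_univ i, ht⟩
    rw [hinner _ t htT]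
  refine ⟨hmem', fun v hv => by rw [hFeq]; exact hmin v hv, ?_⟩
  -- representation
  have hrep : ∀ r, ∃ θ : S → ℝ, P (vhat r).2.2 = ∑ t ∈ T, θ t • φ t := by
    intro r
    have hmemV : P (vhat r).2.2 ∈ Submodule.span ℝ (φ '' (T : Set S)) := by
      rw [← hV]; exact (hP (vhat r).2.2).1
    rw [Finsupp.mem_span_image_iff_linearCombination] at hmemV
    obtain ⟨l, hl, hleq⟩ := hmemV
    refine ⟨fun t => l t, ?_⟩
    rw [← hleq, Finsupp.linearCombination_apply, Finsupp.sum]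
    rw [Finset.sum_subset hl]
    intro x _ hx
    simp [Finsupp.notMem_support_iff.mp hx]
  choose θ hθ using hrep
  exact ⟨θ, hθ⟩
end

section
/- Let m ∈ ℕ, w, w̃ ∈ ℝ^m, s ∈ ℝ, z ∈ ℝ^m, and set x_k = w_k·s + z_k for k = 1, …, m. Suppose Σ_{k=1}^m w̃_k² ≥ C₁ for some C₁ > 0 and |w̃_k| ≤ M for all k. Then the weighted least-squares estimate ŝ = (Σ_{k=1}^m w̃_k·x_k) / (Σ_{k=1}^m w̃_k²), which is the global minimizer over s' ∈ ℝ of Σ_{k=1}^m (x_k − w̃_k·s')², satisfies |ŝ − s| ≤ (M / C₁) · Σ_{k=1}^m ( |s|·|w_k − w̃_k| + |z_k| ). -/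
/-- One-coordinate perturbation bound for a one-dimensional weighted
least-squares problem with perturbed weights `wt` and additive noise `z`. -/
theorem stmt_11
    (m : ℕ) (w wt : Fin m → ℝ) (s : ℝ) (z : Fin m → ℝ)
    (x : Fin m → ℝ) (hx : ∀ k, x k = w k * s + z k)
    (C₁ M : ℝ) (hC₁ : 0 < C₁)
    (hsum : C₁ ≤ ∑ k, wt k ^ 2) (hM : ∀ k, |wt k| ≤ M)
    (shat : ℝ) (hshat : shat = (∑ k, wt k * x k) / (∑ k, wt k ^ 2)) :
    (∀ s' : ℝ, ∑ k, (x k - wt k * shat) ^ 2 ≤ ∑ k, (x k - wt k * s') ^ 2) ∧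
    |shat - s| ≤ (M / C₁) * ∑ k, (|s| * |w k - wt k| + |z k|) := by
  have hD : (0:ℝ) < ∑ k, wt k ^ 2 := lt_of_lt_of_le hC₁ hsum
  have hS : shat * ∑ k, wt k ^ 2 = ∑ k, wt k * x k := by
    rw [hshat]; field_simp
  have e1 : ∀ t : ℝ, ∑ k, (x k - wt k * t) ^ 2
      = ∑ k, x k ^ 2 - 2 * t * (∑ k, wt k * x k) + t ^ 2 * (∑ k, wt k ^ 2) := by
    intro t
    rw [Finset.mul_sum, Finset.mul_sum, ← Finset.sum_sub_distrib, ← Finset.sum_add_distrib]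
    exact Finset.sum_congr rfl (fun k _ => by ring)
  have hm : 0 < m := by
    by_contra h
    push_neg at h
    interval_cases m
    simp at hsum
    linarith
  have hMnn : 0 ≤ M := le_trans (abs_nonneg _) (hM ⟨0, hm⟩)
  constructor
  · intro s'
    rw [e1 s', e1 shat, ← hS]
    nlinarith [mul_nonneg hD.le (sq_nonneg (s' - shat))]
  · have h2 : shat - s
        = (∑ k, (wt k * (w k - wt k) * s + wt k * z k)) / ∑ k, wt k ^ 2 := by
      rw [hshat, div_sub' (ne_of_gt hD)]
      congr 1
      rw [Finset.sum_mul, ← Finset.sum_sub_distrib]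
      exact Finset.sum_congr rfl (fun k _ => by rw [hx k]; ring)
    have hT : 0 ≤ ∑ k, (|s| * |w k - wt k| + |z k|) :=
      Finset.sum_nonneg fun k _ => by positivity
    have hN : |∑ k, (wt k * (w k - wt k) * s + wt k * z k)|
        ≤ M * ∑ k, (|s| * |w k - wt k| + |z k|) := by
      calc |∑ k, (wt k * (w k - wt k) * s + wt k * z k)|
          ≤ ∑ k, |wt k * (w k - wt k) * s + wt k * z k| :=
            Finset.abs_sum_le_sum_abs _ _
        _ ≤ ∑ k, M * (|s| * |w k - wt k| + |z k|) := by
            apply Finset.sum_le_sum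
            intro k _
            calc |wt k * (w k - wt k) * s + wt k * z k|
                ≤ |wt k * (w k - wt k) * s| + |wt k * z k| := abs_add_le _ _
              _ = |wt k| * |w k - wt k| * |s| + |wt k| * |z k| := by
                  rw [abs_mul, abs_mul, abs_mul]
              _ ≤ M * (|s| * |w k - wt k| + |z k|) := by
                  nlinarith [mul_nonneg (mul_nonneg (sub_nonneg.2 (hM k))
                      (abs_nonneg (w k - wt k))) (abs_nonneg s),
                    mul_nonneg (sub_nonneg.2 (hM k)) (abs_nonneg (z k))]
        _ = M * ∑ k, (|s| * |w k - wt k| + |z k|) := (Finset.mul_sum _ _ _).symm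
    rw [h2, abs_div, abs_of_pos hD, div_mul_eq_mul_div]
    gcongr
end
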